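/- Let f: {1,...,2a} -> Q with a > 1. If there exists x in [a] with f(x) = 0 and f(1) != 0, then for any x_1 < x_2 both in the zero set Z(f) = {x in [a] : f(x) = 0}, at least one of x_1, x_1+1, ..., x_2 - 1 belongs to P_1(f) = {x in [a] : f(x+1) != f(x) + f(1)}. Consequently |Z(f)| <= |P_1(f)|. -/

import Mathlib

theorem zeros_force_problems (a : ℕ) (ha : 1 < a) (f : ℕ → ℚ)
    (h1 : f 1 ≠ 0) :
    (∀ x₁ x₂ : ℕ, x₁ ∈ (Finset.Icc 1 a).filter (fun x => f x = 0) →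
      x₂ ∈ (Finset.Icc 1 a).filter (fun x => f x = 0) → x₁ < x₂ →
      ∃ x ∈ (Finset.Icc 1 a).filter (fun x => f (x + 1) ≠ f x + f 1),
        x₁ ≤ x ∧ x < x₂) ∧
    ((Finset.Icc 1 a).filter (fun x => f x = 0)).card ≤
      ((Finset.Icc 1 a).filter (fun x => f (x + 1) ≠ f x + f 1)).card := by
  classical
  set Z := (Finset.Icc 1 a).filter (fun x => f x = 0) with hZ
  set P := (Finset.Icc 1 a).filter (fun x => f (x + 1) ≠ f x + f 1) with hP
  have lemA : ∀ n s : ℕ, (∀ y, s ≤ y → y < s + n → f (y + 1) = f y + f 1) →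
      f (s + n) = f s + n * f 1 := by
    intro n
    induction n with
    | zero => intro s _; simp
    | succ n ih =>
      intro s h
      have h0 := ih s (fun y hy hy' => h y hy (by omega))
      have h2 := h (s + n) (by omega) (by omega)
      have : s + (n + 1) = (s + n) + 1 := by ring
      rw [this, h2, h0]
      push_cast; ring
  have key : ∀ x₁ x₂ : ℕ, x₁ ∈ Z → x₂ ∈ Z → x₁ < x₂ →
      ∃ x ∈ P, x₁ ≤ x ∧ x < x₂ := by
    intro x₁ x₂ hx₁ hx₂ hlt
    by_contra hc
    push_neg at hc
    simp only [hZ, Finset.mem_filter, Finset.mem_Icc] at hx₁ hx₂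
    have hall : ∀ y, x₁ ≤ y → y < x₁ + (x₂ - x₁) → f (y + 1) = f y + f 1 := by
      intro y hy hy'
      by_contra hne
      have hyP : y ∈ P := by
        simp only [hP, Finset.mem_filter, Finset.mem_Icc]
        exact ⟨⟨by omega, by omega⟩, hne⟩
      have := hc y hyP hy
      omega
    have hfin := lemA (x₂ - x₁) x₁ hall
    rw [show x₁ + (x₂ - x₁) = x₂ by omega, hx₁.2, hx₂.2] at hfin
    have : f 1 = 0 := by
      have hfin : ((x₂ - x₁ : ℕ) : ℚ) = 0 ∨ f 1 = 0 := mul_eq_zero.mp (by linarith)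
      rcases hfin with h | h
      · exact absurd h (by exact_mod_cast Nat.sub_ne_zero_of_lt hlt)
      · exact h
    exact h1 this
  refine ⟨key, ?_⟩
  -- for each zero, the set of problems below it is nonempty
  have hne : ∀ x ∈ Z, (P.filter (fun p => p < x)).Nonempty := by
    intro x hx
    simp only [hZ, Finset.mem_filter, Finset.mem_Icc] at hx
    have hx2 : 2 ≤ x := by
      rcases Nat.lt_or_ge x 2 with h | h
      · interval_cases x
        · omega
        · exact absurd hx.2 h1
      · exact h
    by_contra hc
    rw [Finset.not_nonempty_iff_eq_empty, Finset.filter_eq_empty_iff] at hc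
    have hall : ∀ y, 1 ≤ y → y < 1 + (x - 1) → f (y + 1) = f y + f 1 := by
      intro y hy hy'
      by_contra hne'
      have hyP : y ∈ P := by
        simp only [hP, Finset.mem_filter, Finset.mem_Icc]
        exact ⟨⟨by omega, by omega⟩, hne'⟩
      exact hc hyP (by omega)
    have hfin := lemA (x - 1) 1 hall
    rw [show 1 + (x - 1) = x by omega, hx.2] at hfin
    have : (x : ℚ) * f 1 = 0 := by
      have : ((x - 1 : ℕ) : ℚ) = (x : ℚ) - 1 := by
        push_cast [Nat.cast_sub (by omega : 1 ≤ x)]; ring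
      rw [this] at hfin
      linarith
    rcases mul_eq_zero.mp this with h | h
    · have : (x : ℚ) ≠ 0 := by exact_mod_cast (by omega : x ≠ 0)
      exact absurd h this
    · exact h1 h
  set F : ℕ → ℕ := fun x =>
    if h : (P.filter (fun p => p < x)).Nonempty then (P.filter (fun p => p < x)).max' h
    else 0 with hF
  have hFmem : ∀ x ∈ Z, F x ∈ P.filter (fun p => p < x) := by
    intro x hx
    simp only [hF, dif_pos (hne x hx)]
    exact Finset.max'_mem _ _
  have hFmono : ∀ x₁ ∈ Z, ∀ x₂ ∈ Z, x₁ < x₂ → F x₁ < F x₂ := by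
    intro x₁ hx₁ x₂ hx₂ hlt
    obtain ⟨p, hpP, hp1, hp2⟩ := key x₁ x₂ hx₁ hx₂ hlt
    have hp : p ∈ P.filter (fun q => q < x₂) := by
      simp only [Finset.mem_filter]; exact ⟨hpP, hp2⟩
    have h2 : p ≤ F x₂ := by
      simp only [hF, dif_pos (hne x₂ hx₂)]
      exact Finset.le_max' _ _ hp
    have h3 : F x₁ < x₁ := (Finset.mem_filter.mp (hFmem x₁ hx₁)).2
    omega
  apply Finset.card_le_card_of_injOn F
  · intro x hx
    exact (Finset.mem_filter.mp (hFmem x hx)).1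
  · intro x₁ hx₁ x₂ hx₂ heq
    rcases lt_trichotomy x₁ x₂ with h | h | h
    · exact absurd heq (by have := hFmono x₁ hx₁ x₂ hx₂ h; omega)
    · exact h
    · exact absurd heq (by have := hFmono x₂ hx₂ x₁ hx₁ h; omega)
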